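/- Let (γ_n)_{n≥1} be a decreasing positive sequence, n₀ ∈ ℕ₀, ρ ≥ √(γ_{n₀+1}), ζ > 0 with ζρ√(γ_{n₀+1}) < 1, and suppose (γ_n - γ_{n+1})/γ_n² ≤ ζ for all n ≥ n₀+1. Let t_n = Σ_{k=1}^n γ_k and let (n_ℓ)_{ℓ≥0} be the ρ-partition: n_ℓ is the largest integer with t_{n_ℓ} - t_{n_{ℓ-1}} ≤ ρ√(γ_{n_{ℓ-1}+1}). Set K = (1 - ζρ√(γ_{n₀+1}))^{-1}. Then for every ℓ ≥ 1: γ_{n_{ℓ-1}+1}/γ_{n_ℓ+1} ≤ K and γ_{n_{ℓ-1}+1}/γ_{n_ℓ+1} ≤ 1 + ζK(t_{n_ℓ} - t_{n_{ℓ-1}}). -/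

import Mathlib

/-- step-size comparison along a `ρ`-partition.
Here `γ n` is the step size (used for `n ≥ 1`), `t n = Σ_{k=1}^n γ k`, and `(n ℓ)` is the
`ρ`-partition with starting value `n 0 = n₀`: `n (ℓ+1)` is the largest integer with
`t (n (ℓ+1)) - t (n ℓ) ≤ ρ √(γ (n ℓ + 1))`, which is encoded by the two inequalities in
`hpart`.  With `K = (1 - ζρ√(γ (n₀+1)))⁻¹` one has for every `ℓ ≥ 1` both
`γ_{n_{ℓ-1}+1}/γ_{n_ℓ+1} ≤ K` and `γ_{n_{ℓ-1}+1}/γ_{n_ℓ+1} ≤ 1 + ζ K (t_{n_ℓ} - t_{n_{ℓ-1}})`. -/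
theorem stmt5_partition_stepsize_comparison
    (γ : ℕ → ℝ) (hpos : ∀ n, 0 < γ n) (hdec : ∀ n, γ (n + 1) ≤ γ n)
    (t : ℕ → ℝ) (ht : ∀ n, t n = ∑ k ∈ Finset.range n, γ (k + 1))
    (n₀ : ℕ) (ρ ζ : ℝ) (hζ : 0 < ζ)
    (hρ : Real.sqrt (γ (n₀ + 1)) ≤ ρ)
    (hsmall : ζ * ρ * Real.sqrt (γ (n₀ + 1)) < 1)
    (hslope : ∀ n, n₀ + 1 ≤ n → (γ n - γ (n + 1)) / (γ n) ^ 2 ≤ ζ)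
    (n : ℕ → ℕ) (hn0 : n 0 = n₀) (hmono : StrictMono n)
    (hpart : ∀ ℓ : ℕ,
      t (n (ℓ + 1)) - t (n ℓ) ≤ ρ * Real.sqrt (γ (n ℓ + 1)) ∧
      ρ * Real.sqrt (γ (n ℓ + 1)) < t (n (ℓ + 1) + 1) - t (n ℓ))
    (K : ℝ) (hK : K = (1 - ζ * ρ * Real.sqrt (γ (n₀ + 1)))⁻¹) :
    ∀ ℓ : ℕ, γ (n ℓ + 1) / γ (n (ℓ + 1) + 1) ≤ K ∧
      γ (n ℓ + 1) / γ (n (ℓ + 1) + 1) ≤ 1 + ζ * K * (t (n (ℓ + 1)) - t (n ℓ)) := by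
  intro ℓ
  have hanti : Antitone γ := antitone_nat_of_succ_le hdec
  set a := n ℓ with ha
  set b := n (ℓ + 1) with hb
  have hab : a < b := hmono (Nat.lt_succ_self ℓ)
  have han0 : n₀ ≤ a := hn0 ▸ hmono.monotone (Nat.zero_le ℓ)
  have hts : t b - t a = ∑ k ∈ Finset.Ico a b, γ (k + 1) := by
    rw [ht, ht, Finset.sum_Ico_eq_sub _ hab.le]
  have hsum_nonneg : 0 ≤ t b - t a := by
    rw [hts]; exact Finset.sum_nonneg fun k _ => (hpos _).le
  have key : ∀ m, a ≤ m → γ (a + 1) - γ (m + 1) ≤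
      ζ * γ (a + 1) * ∑ k ∈ Finset.Ico a m, γ (k + 1) := by
    intro m hm
    induction m, hm using Nat.le_induction with
    | base => simp
    | succ m hm ih =>
      rw [Finset.sum_Ico_succ_top hm]
      have hstep : γ (m + 1) - γ (m + 2) ≤ ζ * γ (m + 1) ^ 2 := by
        have h := hslope (m + 1) (by omega)
        have hpos' : (0:ℝ) < γ (m + 1) ^ 2 := pow_pos (hpos _) 2
        calc γ (m + 1) - γ (m + 2) = (γ (m + 1) - γ (m + 2)) / γ (m + 1) ^ 2 * γ (m + 1) ^ 2 := by
              rw [div_mul_cancel₀ _ hpos'.ne']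
          _ ≤ ζ * γ (m + 1) ^ 2 := by
              exact mul_le_mul_of_nonneg_right h hpos'.le
      have hγle : γ (m + 1) ≤ γ (a + 1) := hanti (by omega)
      have : γ (m + 1) - γ (m + 2) ≤ ζ * γ (a + 1) * γ (m + 1) := by
        calc γ (m + 1) - γ (m + 2) ≤ ζ * γ (m + 1) ^ 2 := hstep
          _ ≤ ζ * γ (a + 1) * γ (m + 1) := by
              have := mul_le_mul_of_nonneg_right hγle (hpos (m + 1)).le
              nlinarith [hpos (m + 1), hζ.le]
      have := ih
      nlinarith
  have key' : γ (a + 1) - γ (b + 1) ≤ ζ * γ (a + 1) * (t b - t a) := by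
    rw [hts]; exact key b hab.le
  set c := ζ * ρ * Real.sqrt (γ (n₀ + 1)) with hc
  have hρ0 : 0 ≤ ρ := le_trans (Real.sqrt_nonneg _) hρ
  have hc0 : 0 ≤ c := by positivity
  have hc1 : c < 1 := hsmall
  have hsqle : Real.sqrt (γ (a + 1)) ≤ Real.sqrt (γ (n₀ + 1)) :=
    Real.sqrt_le_sqrt (hanti (by omega))
  have hζt : ζ * (t b - t a) ≤ c := by
    have h1 : t b - t a ≤ ρ * Real.sqrt (γ (a + 1)) := (hpart ℓ).1
    have h2 : ρ * Real.sqrt (γ (a + 1)) ≤ ρ * Real.sqrt (γ (n₀ + 1)) :=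
      mul_le_mul_of_nonneg_left hsqle hρ0
    calc ζ * (t b - t a) ≤ ζ * (ρ * Real.sqrt (γ (n₀ + 1))) :=
          mul_le_mul_of_nonneg_left (h1.trans h2) hζ.le
      _ = c := by ring
  have hlow : γ (a + 1) * (1 - c) ≤ γ (b + 1) := by
    have : γ (a + 1) - γ (b + 1) ≤ c * γ (a + 1) := by
      calc γ (a + 1) - γ (b + 1) ≤ ζ * γ (a + 1) * (t b - t a) := key'
        _ = ζ * (t b - t a) * γ (a + 1) := by ring
        _ ≤ c * γ (a + 1) := mul_le_mul_of_nonneg_right hζt (hpos _).le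
    nlinarith
  have h1c : 0 < 1 - c := by linarith
  have hK0 : 0 < K := by rw [hK]; positivity
  have hKc : K * (1 - c) = 1 := by rw [hK]; field_simp
  have hbpos := hpos (b + 1)
  have hfirst : γ (a + 1) / γ (b + 1) ≤ K := by
    rw [div_le_iff₀ hbpos]
    calc γ (a + 1) = K * (γ (a + 1) * (1 - c)) := by
          rw [show K * (γ (a + 1) * (1 - c)) = γ (a + 1) * (K * (1 - c)) by ring, hKc, mul_one]
      _ ≤ K * γ (b + 1) := mul_le_mul_of_nonneg_left hlow hK0.le
  refine ⟨hfirst, ?_⟩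
  have h2 : γ (a + 1) / γ (b + 1) = 1 + (γ (a + 1) - γ (b + 1)) / γ (b + 1) := by
    field_simp
    ring
  rw [h2]
  have : (γ (a + 1) - γ (b + 1)) / γ (b + 1) ≤ ζ * (t b - t a) * (γ (a + 1) / γ (b + 1)) := by
    rw [div_le_iff₀ hbpos]
    calc γ (a + 1) - γ (b + 1) ≤ ζ * γ (a + 1) * (t b - t a) := key'
      _ = ζ * (t b - t a) * (γ (a + 1) / γ (b + 1)) * γ (b + 1) := by
          field_simp
  have hmul : ζ * (t b - t a) * (γ (a + 1) / γ (b + 1)) ≤ ζ * (t b - t a) * K :=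
    mul_le_mul_of_nonneg_left hfirst (by positivity)
  have : (γ (a + 1) - γ (b + 1)) / γ (b + 1) ≤ ζ * K * (t b - t a) := by
    calc (γ (a + 1) - γ (b + 1)) / γ (b + 1) ≤ ζ * (t b - t a) * K := le_trans this hmul
      _ = ζ * K * (t b - t a) := by ring
  linarith
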